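/- Under the longitudinal setup, the multi-step change-of-measure (inverse probability weighting) identity holds: for every bounded jointly measurable ψ : 𝓐_1×…×𝓐_τ × 𝓛_1 → ℝ, E[ ( ∏_{t=1}^τ r_t(A_t, H_t) ) · ψ(Ā, V) ] = E[ ∫ ψ(ā, V) ∏_{t=1}^τ λ_t(a_t, ā_{t-1}, V) d(ν_1 ⊗ … ⊗ ν_τ)(ā) ]. -/

import Mathlib

open MeasureTheory ProbabilityTheory

noncomputable section

/-- The type of the history `H_t = (A_1,…,A_{t-1}, L_1,…,L_t)`, encoded as
`((A_1,…,A_{t-1}), (L_2,…,L_t), L_1)`. -/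
def Hist (𝓐 𝓛 : ℕ → Type) (t : ℕ) : Type :=
  (∀ s : Fin (t - 1), 𝓐 (s + 1)) × (∀ s : Fin (t - 1), 𝓛 (s + 2)) × 𝓛 1

instance Hist.instMeasurableSpace (𝓐 𝓛 : ℕ → Type) [∀ t, MeasurableSpace (𝓐 t)]
    [∀ t, MeasurableSpace (𝓛 t)] (t : ℕ) : MeasurableSpace (Hist 𝓐 𝓛 t) :=
  inferInstanceAs (MeasurableSpace
    ((∀ s : Fin (t - 1), 𝓐 (s + 1)) × (∀ s : Fin (t - 1), 𝓛 (s + 2)) × 𝓛 1))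

/-- The treatment history `Ā_{t-1} = (A_1,…,A_{t-1})` contained in a history. -/
def Hist.abar {𝓐 𝓛 : ℕ → Type} {t : ℕ} (h : Hist 𝓐 𝓛 t) : ∀ s : Fin (t - 1), 𝓐 (s + 1) := h.1

/-- The baseline covariate `V = L_1` contained in a history. -/
def Hist.V {𝓐 𝓛 : ℕ → Type} {t : ℕ} (h : Hist 𝓐 𝓛 t) : 𝓛 1 := h.2.2

/-- The observed history `H_t(ω)` as a function of the underlying random variables. -/
def histOf {Ω : Type} (𝓐 𝓛 : ℕ → Type) (A : ∀ t, Ω → 𝓐 t) (Lv : ∀ t, Ω → 𝓛 t) (t : ℕ)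
    (ω : Ω) : Hist 𝓐 𝓛 t :=
  ⟨fun s => A (s + 1) ω, fun s => Lv (s + 2) ω, Lv 1 ω⟩

/-- The density ratio (stabilized weight)
`r_t(a, h) = λ_t(a, av_{t-1}, v) / g_t(a, h)`, set to `0` where `λ_t = 0`. -/
def ratio {𝓐 𝓛 : ℕ → Type} (g : ∀ t, 𝓐 t → Hist 𝓐 𝓛 t → ℝ)
    (lam : ∀ t, 𝓐 t → (∀ s : Fin (t - 1), 𝓐 (s + 1)) → 𝓛 1 → ℝ) (t : ℕ) (a : 𝓐 t)
    (h : Hist 𝓐 𝓛 t) : ℝ :=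
  if lam t a h.abar h.V = 0 then 0 else lam t a h.abar h.V / g t a h

/-- The longitudinal setup: a probability space carrying random variables
`L_1, A_1, …, L_τ, A_τ, Y`, with conditional densities `g_t` of `A_t` given `H_t`
with respect to σ-finite measures `ν_t`, user-given conditional densities
`λ_t(a, av_{t-1}, v)` integrating to one, positivity, and a bound `c` on the density
ratio `r_t`. -/
structure LongSetup (τ d : ℕ) (c : ℝ) where
  (Ω : Type)
  [mΩ : MeasurableSpace Ω]
  (𝓐 : ℕ → Type)
  [m𝓐 : ∀ t, MeasurableSpace (𝓐 t)]
  (𝓛 : ℕ → Type)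
  [m𝓛 : ∀ t, MeasurableSpace (𝓛 t)]
  (P : Measure Ω)
  [hP : IsProbabilityMeasure P]
  (A : ∀ t, Ω → 𝓐 t)
  (Lv : ∀ t, Ω → 𝓛 t)
  (Y : Ω → ℝ)
  (hτ : 1 ≤ τ)
  (mA : ∀ t, Measurable (A t))
  (mL : ∀ t, Measurable (Lv t))
  (mY : Measurable Y)
  (bY : ∃ C, ∀ ω, |Y ω| ≤ C)
  (ν : ∀ t, Measure (𝓐 t))
  (hν : ∀ t, SigmaFinite (ν t))
  (g : ∀ t, 𝓐 t → Hist 𝓐 𝓛 t → ℝ)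
  (mg : ∀ t, Measurable (fun p : 𝓐 t × Hist 𝓐 𝓛 t => g t p.1 p.2))
  (g_nonneg : ∀ t a h, 0 ≤ g t a h)
  (g_density : ∀ t, 1 ≤ t → t ≤ τ → ∀ f : 𝓐 t → ℝ, Measurable f → (∃ C, ∀ a, |f a| ≤ C) → (P[fun ω => f (A t ω)|MeasurableSpace.comap (histOf 𝓐 𝓛 A Lv t) inferInstance]) =ᵐ[P] fun ω => ∫ a, f a * g t a (histOf 𝓐 𝓛 A Lv t ω) ∂ν t)
  (lam : ∀ t, 𝓐 t → (∀ s : Fin (t - 1), 𝓐 (s + 1)) → 𝓛 1 → ℝ)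
  (mlam : ∀ t, Measurable (fun p : 𝓐 t × (∀ s : Fin (t - 1), 𝓐 (s + 1)) × 𝓛 1 => lam t p.1 p.2.1 p.2.2))
  (lam_nonneg : ∀ t a ab v, 0 ≤ lam t a ab v)
  (lam_prob : ∀ t, 1 ≤ t → t ≤ τ → ∀ (ab : ∀ s : Fin (t - 1), 𝓐 (s + 1)) (v : 𝓛 1), ∫ a, lam t a ab v ∂ν t = 1)
  (pos : ∀ t, 1 ≤ t → t ≤ τ → ∀ a h, 0 < lam t a (Hist.abar h) (Hist.V h) → 0 < g t a h)
  (c_nonneg : 0 ≤ c)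
  (r_bound : ∀ t, 1 ≤ t → t ≤ τ → ∀ᵐ ω ∂P, |ratio g lam t (A t ω) (histOf 𝓐 𝓛 A Lv t ω)| ≤ c)

attribute [instance] LongSetup.mΩ LongSetup.m𝓐 LongSetup.m𝓛 LongSetup.hP LongSetup.hν

namespace LongSetup

variable {τ d : ℕ} {c : ℝ} (S : LongSetup τ d c)

/-- The observed history `H_t`. -/
def H (t : ℕ) : S.Ω → Hist S.𝓐 S.𝓛 t := histOf S.𝓐 S.𝓛 S.A S.Lv t

/-- The density ratio `r_t` of the setup. -/
def r : ∀ t, ∀ _ : S.𝓐 t, Hist S.𝓐 S.𝓛 t → ℝ := ratio S.g S.lam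

/-- The full treatment vector `Ā = (A_1,…,A_τ)`. -/
def Abar (ω : S.Ω) : ∀ s : Fin τ, S.𝓐 (s + 1) := fun s => S.A (s + 1) ω

/-- The baseline covariate `V = L_1`. -/
def V (ω : S.Ω) : S.𝓛 1 := S.Lv 1 ω

/-- The σ-algebra `σ(A_t, H_t)`, with the convention that it is the trivial σ-algebra
for `t = 0`. -/
def sigmaAH (t : ℕ) : MeasurableSpace S.Ω :=
  if t = 0 then ⊥ else MeasurableSpace.comap (fun ω => (S.A t ω, S.H t ω)) inferInstance

/-- The σ-algebra `σ(H_t)`. -/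
def sigmaH (t : ℕ) : MeasurableSpace S.Ω :=
  MeasurableSpace.comap (S.H t) inferInstance

end LongSetup

end

open MeasureTheory ProbabilityTheory

noncomputable section

/-- The restriction `av_{t-1} = (a_1,…,a_{t-1})` of a full treatment vector
`av = (a_1,…,a_τ)` to its first `t-1` coordinates. -/
def truncA {𝓐 : ℕ → Type} {τ : ℕ} (av : ∀ s : Fin τ, 𝓐 (s + 1)) (t : ℕ) (_h2 : t ≤ τ) :
    ∀ s : Fin (t - 1), 𝓐 (s + 1) :=
  fun s => av ⟨s, by have := s.isLt; omega⟩


noncomputable section AuxChangeOfMeasure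

open MeasureTheory ProbabilityTheory
open scoped ENNReal NNReal

/-- Truncation of a `t`-vector of treatments strictly below an index. -/
def trunc0 {𝓐 : ℕ → Type} {t : ℕ} (av : ∀ s : Fin t, 𝓐 (s + 1)) (s : Fin t) :
    ∀ j : Fin (s : ℕ), 𝓐 (j + 1) :=
  fun j => av ⟨j, j.isLt.trans s.isLt⟩

/-- Projection of a history to an earlier time. -/
def histProj {𝓐 𝓛 : ℕ → Type} {t : ℕ} (h : Hist 𝓐 𝓛 t) (s : ℕ) (hs : s ≤ t) : Hist 𝓐 𝓛 s :=
  ⟨fun j : Fin (s - 1) => h.1 ⟨(j : ℕ), by have := j.isLt; omega⟩,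
    fun j : Fin (s - 1) => h.2.1 ⟨(j : ℕ), by have := j.isLt; omega⟩, h.2.2⟩

/-- `Fin.snoc` as a measurable equivalence, splitting off the last coordinate. -/
def snocME {n : ℕ} (α : Fin (n + 1) → Type*) [∀ i, MeasurableSpace (α i)] :
    ((∀ j : Fin n, α j.castSucc) × α (Fin.last n)) ≃ᵐ (∀ i, α i) where
  toEquiv := (Equiv.prodComm _ _).trans (Fin.snocEquiv α)
  measurable_toFun := by
    show Measurable fun p : (∀ j : Fin n, α j.castSucc) × α (Fin.last n) =>
      (Fin.snoc p.1 p.2 : ∀ i, α i)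
    apply measurable_pi_lambda
    intro i
    induction i using Fin.lastCases with
    | last =>
      simp only [Fin.snoc_last]
      exact measurable_snd
    | cast j =>
      simp only [Fin.snoc_castSucc]
      exact (measurable_pi_apply j).comp measurable_fst
  measurable_invFun := by
    show Measurable fun f : ∀ i, α i =>
      ((fun j : Fin n => f j.castSucc, f (Fin.last n)) : (∀ j : Fin n, α j.castSucc) × α (Fin.last n))
    exact (measurable_pi_lambda _ fun j => measurable_pi_apply _).prodMk (measurable_pi_apply _)

lemma snocME_apply {n : ℕ} (α : Fin (n + 1) → Type*) [∀ i, MeasurableSpace (α i)]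
    (p : (∀ j : Fin n, α j.castSucc) × α (Fin.last n)) :
    snocME α p = Fin.snoc p.1 p.2 := rfl

theorem measurePreserving_snocME {n : ℕ} {α : Fin (n + 1) → Type*} [∀ i, MeasurableSpace (α i)]
    (μ : ∀ i, Measure (α i)) [∀ i, SigmaFinite (μ i)] :
    MeasurePreserving (snocME α) ((Measure.pi fun j : Fin n => μ j.castSucc).prod (μ (Fin.last n)))
      (Measure.pi μ) := by
  refine ⟨(snocME α).measurable, (Measure.pi_eq fun s hs => ?_).symm⟩
  rw [Measure.map_apply (snocME α).measurable (MeasurableSet.univ_pi hs)]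
  have hpre : (⇑(snocME α)) ⁻¹' (Set.univ.pi s)
      = (Set.univ.pi fun j : Fin n => s j.castSucc) ×ˢ s (Fin.last n) := by
    ext ⟨f, a⟩
    simp only [Set.mem_preimage, Set.mem_pi, Set.mem_univ, true_implies, Set.mem_prod,
      snocME_apply]
    constructor
    · intro h
      exact ⟨fun j => by simpa using h j.castSucc, by simpa using h (Fin.last n)⟩
    · intro h i
      induction i using Fin.lastCases with
      | last => simpa using h.2
      | cast j => simpa using h.1 j
  rw [hpre, Measure.prod_prod, Measure.pi_pi, Fin.prod_univ_castSucc]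

namespace LongSetup

variable {τ d : ℕ} {c : ℝ} (S : LongSetup τ d c)

lemma measurable_H (t : ℕ) : Measurable (S.H t) := by
  show Measurable fun ω =>
    ((fun s : Fin (t - 1) => S.A (s + 1) ω, fun s : Fin (t - 1) => S.Lv (s + 2) ω, S.Lv 1 ω) :
      Hist S.𝓐 S.𝓛 t)
  exact (measurable_pi_lambda _ fun s => S.mA _).prodMk
    ((measurable_pi_lambda _ fun s => S.mL _).prodMk (S.mL 1))

lemma measurable_r (t : ℕ) :
    Measurable fun p : S.𝓐 t × Hist S.𝓐 S.𝓛 t => S.r t p.1 p.2 := by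
  have hl : Measurable fun p : S.𝓐 t × Hist S.𝓐 S.𝓛 t => S.lam t p.1 p.2.1 p.2.2.2 :=
    (S.mlam t).comp (measurable_fst.prodMk ((measurable_fst.comp measurable_snd).prodMk
      (measurable_snd.comp (measurable_snd.comp measurable_snd))))
  have hg : Measurable fun p : S.𝓐 t × Hist S.𝓐 S.𝓛 t => S.g t p.1 p.2 := S.mg t
  show Measurable fun p : S.𝓐 t × Hist S.𝓐 S.𝓛 t =>
    if S.lam t p.1 p.2.1 p.2.2.2 = 0 then 0 else S.lam t p.1 p.2.1 p.2.2.2 / S.g t p.1 p.2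
  exact Measurable.ite (hl (measurableSet_singleton 0)) measurable_const (hl.div hg)

lemma nonempty_Omega : Nonempty S.Ω := by
  by_contra h
  have h1 : S.P Set.univ = 1 := measure_univ
  rw [Set.univ_eq_empty_iff.mpr (not_nonempty_iff.mp h), measure_empty] at h1
  exact zero_ne_one h1

lemma lam_integrable (t : ℕ) (h1 : 1 ≤ t) (h2 : t ≤ τ)
    (ab : ∀ s : Fin (t - 1), S.𝓐 (s + 1)) (v : S.𝓛 1) :
    Integrable (fun a => S.lam t a ab v) (S.ν t) := by
  by_contra hni
  have h := S.lam_prob t h1 h2 ab v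
  rw [integral_undef hni] at h
  exact zero_ne_one h

lemma lam_lintegral_one (t : ℕ) (h1 : 1 ≤ t) (h2 : t ≤ τ)
    (ab : ∀ s : Fin (t - 1), S.𝓐 (s + 1)) (v : S.𝓛 1) :
    ∫⁻ a, ENNReal.ofReal (S.lam t a ab v) ∂S.ν t = 1 := by
  rw [← ofReal_integral_eq_lintegral_ofReal (S.lam_integrable t h1 h2 ab v)
    (Filter.Eventually.of_forall fun a => S.lam_nonneg t a ab v),
    S.lam_prob t h1 h2 ab v, ENNReal.ofReal_one]

/-- One-step change of measure using the conditional density `g_t`. -/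
lemma onestep (t : ℕ) (h1 : 1 ≤ t) (h2 : t ≤ τ)
    (F : S.𝓐 t → Hist S.𝓐 S.𝓛 t → ℝ)
    (mF : Measurable fun p : S.𝓐 t × Hist S.𝓐 S.𝓛 t => F p.1 p.2)
    (C : ℝ) (bF : ∀ᵐ ω ∂S.P, |F (S.A t ω) (S.H t ω)| ≤ C) :
    ∫ ω, F (S.A t ω) (S.H t ω) ∂S.P
      = ∫ ω, ∫ a, F a (S.H t ω) * S.g t a (S.H t ω) ∂S.ν t ∂S.P := by
  classical
  have mH := S.measurable_H t
  have mA := S.mA t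
  have mpair : Measurable fun ω => (S.H t ω, S.A t ω) := mH.prodMk mA
  have hm : MeasurableSpace.comap (S.H t) inferInstance ≤ S.mΩ :=
    measurable_iff_comap_le.mp mH
  set η : Measure (Hist S.𝓐 S.𝓛 t) := S.P.map (S.H t) with hη
  haveI : IsProbabilityMeasure η := Measure.isProbabilityMeasure_map mH.aemeasurable
  set μ₁ : Measure (Hist S.𝓐 S.𝓛 t × S.𝓐 t) := S.P.map (fun ω => (S.H t ω, S.A t ω)) with hμ₁
  haveI : IsProbabilityMeasure μ₁ := Measure.isProbabilityMeasure_map mpair.aemeasurable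
  have mgflip : Measurable fun p : Hist S.𝓐 S.𝓛 t × S.𝓐 t => S.g t p.2 p.1 :=
    (S.mg t).comp (measurable_snd.prodMk measurable_fst)
  set μ₂ : Measure (Hist S.𝓐 S.𝓛 t × S.𝓐 t) :=
    (η.prod (S.ν t)).withDensity (fun p => ENNReal.ofReal (S.g t p.2 p.1)) with hμ₂
  -- a.e. normalization of `g`
  have hnorm : ∀ᵐ ω ∂S.P, Integrable (fun a => S.g t a (S.H t ω)) (S.ν t)
      ∧ ∫ a, S.g t a (S.H t ω) ∂S.ν t = 1 := by
    have h0 := S.g_density t h1 h2 (fun _ => (1:ℝ)) measurable_const ⟨1, fun a => by norm_num⟩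
    have h0' : (S.P[(fun _ => (1:ℝ))|MeasurableSpace.comap (S.H t) inferInstance])
        =ᵐ[S.P] fun ω => ∫ a, S.g t a (S.H t ω) ∂S.ν t := by
      refine h0.mono fun ω hω => ?_
      simpa [LongSetup.H] using hω
    rw [condExp_const hm] at h0'
    filter_upwards [h0'] with ω hω
    have hint : Integrable (fun a => S.g t a (S.H t ω)) (S.ν t) := by
      by_contra hni
      rw [integral_undef hni] at hω
      exact one_ne_zero hω
    exact ⟨hint, hω.symm⟩
  -- rectangles
  have hrect : ∀ (Cs : Set (Hist S.𝓐 S.𝓛 t)) (Bs : Set (S.𝓐 t)), MeasurableSet Cs →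
      MeasurableSet Bs → μ₁ (Cs ×ˢ Bs) = μ₂ (Cs ×ˢ Bs) := by
    intro Cs Bs hCs hBs
    have e1 : μ₁ (Cs ×ˢ Bs) = S.P (S.H t ⁻¹' Cs ∩ S.A t ⁻¹' Bs) := by
      rw [hμ₁, Measure.map_apply mpair (hCs.prod hBs), Set.mk_preimage_prod]
    set f : S.𝓐 t → ℝ := Bs.indicator (fun _ => 1) with hf
    have mf : Measurable f := measurable_const.indicator hBs
    have bf1 : ∀ a, |f a| ≤ 1 := fun a => by
      by_cases hmem : a ∈ Bs <;> simp [hf, Set.indicator_apply, hmem]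
    have hden := S.g_density t h1 h2 f mf ⟨1, bf1⟩
    have hintf : Integrable (fun ω => f (S.A t ω)) S.P := by
      refine ⟨(mf.comp mA).aestronglyMeasurable, HasFiniteIntegral.of_bounded (C := 1) ?_⟩
      exact Filter.Eventually.of_forall fun ω => by rw [Real.norm_eq_abs]; exact bf1 _
    have hsm : MeasurableSet[MeasurableSpace.comap (S.H t) inferInstance] (S.H t ⁻¹' Cs) :=
      ⟨Cs, hCs, rfl⟩
    have hset := setIntegral_condExp hm hintf hsm
    have hcond : ∫ ω in S.H t ⁻¹' Cs, f (S.A t ω) ∂S.P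
        = ∫ ω in S.H t ⁻¹' Cs, (∫ a, f a * S.g t a (S.H t ω) ∂S.ν t) ∂S.P := by
      rw [← hset]
      exact setIntegral_congr_ae (hm _ hsm) (hden.mono fun ω hω _ => hω)
    have e2 : ∫ ω in S.H t ⁻¹' Cs, f (S.A t ω) ∂S.P
        = (S.P (S.H t ⁻¹' Cs ∩ S.A t ⁻¹' Bs)).toReal := by
      have hfind : ∀ ω, f (S.A t ω) = (S.A t ⁻¹' Bs).indicator (fun _ => (1:ℝ)) ω := fun ω => by
        by_cases hmem : S.A t ω ∈ Bs <;> simp [hf, Set.indicator_apply, Set.mem_preimage, hmem]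
      simp only [hfind]
      rw [setIntegral_indicator (mA hBs), setIntegral_const, smul_eq_mul, mul_one]
      rfl
    have hginner : ∀ ω, ∫ a, f a * S.g t a (S.H t ω) ∂S.ν t
        = ∫ a in Bs, S.g t a (S.H t ω) ∂S.ν t := by
      intro ω
      rw [← integral_indicator hBs]
      refine integral_congr_ae (Filter.Eventually.of_forall fun a => ?_)
      by_cases hmem : a ∈ Bs <;> simp [hf, Set.indicator_apply, hmem]
    have e3 : μ₂ (Cs ×ˢ Bs) = ∫⁻ ω in S.H t ⁻¹' Cs,
        (∫⁻ a in Bs, ENNReal.ofReal (S.g t a (S.H t ω)) ∂S.ν t) ∂S.P := by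
      rw [hμ₂, withDensity_apply _ (hCs.prod hBs), ← Measure.prod_restrict,
        lintegral_prod (fun p : Hist S.𝓐 S.𝓛 t × S.𝓐 t => ENNReal.ofReal (S.g t p.2 p.1))
          (mgflip.ennreal_ofReal).aemeasurable]
      rw [hη, Measure.restrict_map mH hCs,
        lintegral_map ((mgflip.ennreal_ofReal).lintegral_prod_right') mH]
    have mG : Measurable fun ω => ∫ a in Bs, S.g t a (S.H t ω) ∂S.ν t := by
      have hsm2 : StronglyMeasurable fun p : Hist S.𝓐 S.𝓛 t × S.𝓐 t => S.g t p.2 p.1 :=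
        mgflip.stronglyMeasurable
      exact (hsm2.integral_prod_right'.measurable).comp mH
    have hae2 : ∀ᵐ ω ∂S.P, (∫⁻ a in Bs, ENNReal.ofReal (S.g t a (S.H t ω)) ∂S.ν t)
        = ENNReal.ofReal (∫ a in Bs, S.g t a (S.H t ω) ∂S.ν t)
        ∧ 0 ≤ ∫ a in Bs, S.g t a (S.H t ω) ∂S.ν t
        ∧ (∫ a in Bs, S.g t a (S.H t ω) ∂S.ν t) ≤ 1 := by
      filter_upwards [hnorm] with ω hω
      refine ⟨(ofReal_integral_eq_lintegral_ofReal hω.1.integrableOn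
        (Filter.Eventually.of_forall fun a => S.g_nonneg t a _)).symm,
        setIntegral_nonneg hBs fun a _ => S.g_nonneg t a _, ?_⟩
      calc (∫ a in Bs, S.g t a (S.H t ω) ∂S.ν t)
          ≤ ∫ a, S.g t a (S.H t ω) ∂S.ν t :=
            setIntegral_le_integral hω.1 (Filter.Eventually.of_forall fun a => S.g_nonneg t a _)
        _ = 1 := hω.2
    have hGint : IntegrableOn (fun ω => ∫ a in Bs, S.g t a (S.H t ω) ∂S.ν t)
        (S.H t ⁻¹' Cs) S.P := by
      refine Integrable.integrableOn ⟨mG.aestronglyMeasurable,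
        HasFiniteIntegral.of_bounded (C := 1) ?_⟩
      filter_upwards [hae2] with ω hω
      rw [Real.norm_eq_abs, abs_of_nonneg hω.2.1]
      exact hω.2.2
    have e4 : (∫⁻ ω in S.H t ⁻¹' Cs,
        (∫⁻ a in Bs, ENNReal.ofReal (S.g t a (S.H t ω)) ∂S.ν t) ∂S.P)
        = ENNReal.ofReal (∫ ω in S.H t ⁻¹' Cs, (∫ a in Bs, S.g t a (S.H t ω) ∂S.ν t) ∂S.P) := by
      rw [lintegral_congr_ae (ae_restrict_of_ae (hae2.mono fun ω hω => hω.1)),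
        ← ofReal_integral_eq_lintegral_ofReal hGint
          (ae_restrict_of_ae (hae2.mono fun ω hω => hω.2.1))]
    rw [e1, e3, e4]
    have : ∫ ω in S.H t ⁻¹' Cs, (∫ a in Bs, S.g t a (S.H t ω) ∂S.ν t) ∂S.P
        = (S.P (S.H t ⁻¹' Cs ∩ S.A t ⁻¹' Bs)).toReal := by
      rw [← e2, hcond]
      exact setIntegral_congr_ae (hm _ hsm)
        (Filter.Eventually.of_forall fun ω _ => (hginner ω).symm)
    rw [this, ENNReal.ofReal_toReal (measure_ne_top _ _)]
  have huniv : μ₁ Set.univ = μ₂ Set.univ := by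
    rw [← Set.univ_prod_univ]
    exact hrect _ _ MeasurableSet.univ MeasurableSet.univ
  have hμeq : μ₁ = μ₂ := by
    refine ext_of_generate_finite _ generateFrom_prod.symm isPiSystem_prod ?_ huniv
    rintro _ ⟨Cs, hCs, Bs, hBs, rfl⟩
    exact hrect Cs Bs hCs hBs
  -- final transfer
  have asm1 : AEStronglyMeasurable (fun p : Hist S.𝓐 S.𝓛 t × S.𝓐 t => F p.2 p.1) μ₁ :=
    (mF.comp (measurable_snd.prodMk measurable_fst)).aestronglyMeasurable
  have hInt1 : Integrable (fun ω => F (S.A t ω) (S.H t ω)) S.P :=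
    ⟨(mF.comp (mA.prodMk mH)).aestronglyMeasurable,
      HasFiniteIntegral.of_bounded (C := C) (bF.mono fun ω h => by rwa [Real.norm_eq_abs])⟩
  have hInt2 : Integrable (fun p : Hist S.𝓐 S.𝓛 t × S.𝓐 t => F p.2 p.1) μ₂ := by
    rw [← hμeq]
    exact (integrable_map_measure asm1 mpair.aemeasurable).mpr hInt1
  have migr : Measurable fun p : Hist S.𝓐 S.𝓛 t × S.𝓐 t => (S.g t p.2 p.1).toNNReal :=
    mgflip.real_toNNReal
  have hwd : μ₂ = (η.prod (S.ν t)).withDensity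
      (fun p => ((S.g t p.2 p.1).toNNReal : ℝ≥0∞)) := rfl
  have hInt3 : Integrable
      (fun p : Hist S.𝓐 S.𝓛 t × S.𝓐 t => (S.g t p.2 p.1).toNNReal • F p.2 p.1)
      (η.prod (S.ν t)) := by
    rw [← integrable_withDensity_iff_integrable_smul migr]
    rw [← hwd]
    exact hInt2
  calc ∫ ω, F (S.A t ω) (S.H t ω) ∂S.P
      = ∫ p, F p.2 p.1 ∂μ₁ := (integral_map mpair.aemeasurable asm1).symm
    _ = ∫ p, F p.2 p.1 ∂μ₂ := by rw [hμeq]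
    _ = ∫ p : Hist S.𝓐 S.𝓛 t × S.𝓐 t,
          (S.g t p.2 p.1).toNNReal • F p.2 p.1 ∂(η.prod (S.ν t)) := by
        rw [hwd]
        exact integral_withDensity_eq_integral_smul migr _
    _ = ∫ h, ∫ a, (S.g t a h).toNNReal • F a h ∂S.ν t ∂η := integral_prod _ hInt3
    _ = ∫ h, ∫ a, F a h * S.g t a h ∂S.ν t ∂η := by
        refine integral_congr_ae (Filter.Eventually.of_forall fun h => ?_)
        refine integral_congr_ae (Filter.Eventually.of_forall fun a => ?_)
        show (S.g t a h).toNNReal • F a h = F a h * S.g t a h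
        rw [NNReal.smul_def, Real.coe_toNNReal _ (S.g_nonneg t a h), smul_eq_mul, mul_comm]
    _ = ∫ ω, ∫ a, F a (S.H t ω) * S.g t a (S.H t ω) ∂S.ν t ∂S.P := by
        rw [hη]
        refine integral_map mH.aemeasurable ?_
        have hsm3 : StronglyMeasurable fun p : Hist S.𝓐 S.𝓛 t × S.𝓐 t =>
            F p.2 p.1 * S.g t p.2 p.1 :=
          ((mF.comp (measurable_snd.prodMk measurable_fst)).mul mgflip).stronglyMeasurable
        exact hsm3.integral_prod_right'.aestronglyMeasurable

/-- One-step change of measure with the weight `r_t`, replacing `g_t` by `λ_t`. -/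
lemma step_change (t : ℕ) (h1 : 1 ≤ t) (h2 : t ≤ τ)
    (F : S.𝓐 t → Hist S.𝓐 S.𝓛 t → ℝ)
    (mF : Measurable fun p : S.𝓐 t × Hist S.𝓐 S.𝓛 t => F p.1 p.2)
    (C : ℝ) (bF : ∀ᵐ ω ∂S.P, |F (S.A t ω) (S.H t ω)| ≤ C) :
    ∫ ω, S.r t (S.A t ω) (S.H t ω) * F (S.A t ω) (S.H t ω) ∂S.P
      = ∫ ω, ∫ a, F a (S.H t ω) * S.lam t a (S.H t ω).1 (S.H t ω).2.2 ∂S.ν t ∂S.P := by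
  have hrg : ∀ (a : S.𝓐 t) (h : Hist S.𝓐 S.𝓛 t),
      S.r t a h * S.g t a h = S.lam t a h.1 h.2.2 := by
    intro a h
    by_cases h0 : S.lam t a h.1 h.2.2 = 0
    · show (if S.lam t a h.1 h.2.2 = 0 then 0 else S.lam t a h.1 h.2.2 / S.g t a h)
        * S.g t a h = S.lam t a h.1 h.2.2
      rw [if_pos h0, zero_mul, h0]
    · have hpos : 0 < S.g t a h :=
        S.pos t h1 h2 a h (lt_of_le_of_ne (S.lam_nonneg t a h.1 h.2.2) (Ne.symm h0))
      show (if S.lam t a h.1 h.2.2 = 0 then 0 else S.lam t a h.1 h.2.2 / S.g t a h)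
        * S.g t a h = S.lam t a h.1 h.2.2
      rw [if_neg h0, div_mul_cancel₀ _ (ne_of_gt hpos)]
  have hbound : ∀ᵐ ω ∂S.P,
      |S.r t (S.A t ω) (S.H t ω) * F (S.A t ω) (S.H t ω)| ≤ c * C := by
    filter_upwards [S.r_bound t h1 h2, bF] with ω hr hF
    rw [abs_mul]
    exact mul_le_mul hr hF (abs_nonneg _) S.c_nonneg
  have hreq := S.onestep t h1 h2 (fun a h => S.r t a h * F a h)
    ((S.measurable_r t).mul mF) (c * C) hbound
  refine hreq.trans ?_
  refine integral_congr_ae (Filter.Eventually.of_forall fun ω => ?_)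
  refine integral_congr_ae (Filter.Eventually.of_forall fun a => ?_)
  show (S.r t a (S.H t ω) * F a (S.H t ω)) * S.g t a (S.H t ω) = _
  rw [mul_comm (S.r t a (S.H t ω)) (F a (S.H t ω)), mul_assoc, hrg]

lemma trunc0_snoc_castSucc {t : ℕ} (f : ∀ j : Fin t, S.𝓐 (j + 1)) (a : S.𝓐 (t + 1))
    (s : Fin t) :
    trunc0 (𝓐 := S.𝓐) (Fin.snoc f a : ∀ s : Fin (t + 1), S.𝓐 (s + 1)) (Fin.castSucc s)
      = trunc0 f s := by
  funext j
  show (Fin.snoc f a : ∀ s : Fin (t + 1), S.𝓐 (s + 1))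
      (Fin.castSucc ⟨(j : ℕ), j.isLt.trans s.isLt⟩) = f ⟨(j : ℕ), j.isLt.trans s.isLt⟩
  rw [Fin.snoc_castSucc]

lemma trunc0_snoc_last {t : ℕ} (f : ∀ j : Fin t, S.𝓐 (j + 1)) (a : S.𝓐 (t + 1)) :
    trunc0 (𝓐 := S.𝓐) (Fin.snoc f a : ∀ s : Fin (t + 1), S.𝓐 (s + 1)) (Fin.last t) = f := by
  funext j
  show (Fin.snoc f a : ∀ s : Fin (t + 1), S.𝓐 (s + 1)) (Fin.castSucc j) = f j
  rw [Fin.snoc_castSucc]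

lemma prod_lam_snoc {t : ℕ} (f : ∀ j : Fin t, S.𝓐 (j + 1)) (a : S.𝓐 (t + 1)) (v : S.𝓛 1) :
    (∏ s : Fin (t + 1), S.lam ((s : ℕ) + 1)
        ((Fin.snoc f a : ∀ s : Fin (t + 1), S.𝓐 (s + 1)) s)
        (trunc0 (Fin.snoc f a) s) v)
      = (∏ s : Fin t, S.lam ((s : ℕ) + 1) (f s) (trunc0 f s) v) * S.lam (t + 1) a f v := by
  rw [Fin.prod_univ_castSucc]
  congr 1
  · refine Finset.prod_congr rfl fun s _ => ?_
    rw [Fin.snoc_castSucc, S.trunc0_snoc_castSucc f a s]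
    rfl
  · rw [Fin.snoc_last, S.trunc0_snoc_last f a]
    rfl

lemma prod_lam_snoc_ofReal {t : ℕ} (f : ∀ j : Fin t, S.𝓐 (j + 1)) (a : S.𝓐 (t + 1))
    (v : S.𝓛 1) :
    (∏ s : Fin (t + 1), ENNReal.ofReal (S.lam ((s : ℕ) + 1)
        ((Fin.snoc f a : ∀ s : Fin (t + 1), S.𝓐 (s + 1)) s)
        (trunc0 (Fin.snoc f a) s) v))
      = (∏ s : Fin t, ENNReal.ofReal (S.lam ((s : ℕ) + 1) (f s) (trunc0 f s) v))
        * ENNReal.ofReal (S.lam (t + 1) a f v) := by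
  rw [Fin.prod_univ_castSucc]
  congr 1
  · refine Finset.prod_congr rfl fun s _ => ?_
    rw [Fin.snoc_castSucc, S.trunc0_snoc_castSucc f a s]
    rfl
  · rw [Fin.snoc_last, S.trunc0_snoc_last f a]
    rfl

lemma pi_lam_lintegral : ∀ (t : ℕ), t ≤ τ → ∀ v : S.𝓛 1,
    ∫⁻ av, ∏ s : Fin t, ENNReal.ofReal (S.lam ((s : ℕ) + 1) (av s) (trunc0 av s) v)
      ∂(Measure.pi fun s : Fin t => S.ν (s + 1)) = 1 := by
  intro t
  induction t with
  | zero =>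
    intro _ v
    simp [lintegral_const, Measure.pi_univ]
  | succ t IH =>
    intro ht v
    have ht' : t ≤ τ := le_trans (Nat.le_succ t) ht
    have h1 : 1 ≤ t + 1 := Nat.le_add_left 1 t
    have hmp := measurePreserving_snocME (fun s : Fin (t + 1) => S.ν (s + 1))
    have mtrunc : ∀ s : Fin (t + 1),
        Measurable fun av : ∀ s' : Fin (t + 1), S.𝓐 (s' + 1) => trunc0 av s :=
      fun s => measurable_pi_lambda _ fun j => measurable_pi_apply _
    have mint : Measurable fun av : ∀ s : Fin (t + 1), S.𝓐 (s + 1) =>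
        ∏ s : Fin (t + 1), ENNReal.ofReal (S.lam ((s : ℕ) + 1) (av s) (trunc0 av s) v) := by
      refine Finset.measurable_prod _ fun s _ => ?_
      exact ENNReal.measurable_ofReal.comp ((S.mlam ((s : ℕ) + 1)).comp
        ((measurable_pi_apply s).prodMk ((mtrunc s).prodMk measurable_const)))
    have hinner : ∀ f : ∀ j : Fin t, S.𝓐 (j + 1),
        (∫⁻ a, (∏ s : Fin (t + 1), ENNReal.ofReal (S.lam ((s : ℕ) + 1)
            ((snocME (fun s : Fin (t + 1) => S.𝓐 (s + 1)) (f, a)) s)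
            (trunc0 (snocME (fun s : Fin (t + 1) => S.𝓐 (s + 1)) (f, a)) s) v)) ∂S.ν (t + 1))
          = ∏ s : Fin t, ENNReal.ofReal (S.lam ((s : ℕ) + 1) (f s) (trunc0 f s) v) := by
      intro f
      have heq : ∀ a : S.𝓐 (t + 1),
          (∏ s : Fin (t + 1), ENNReal.ofReal (S.lam ((s : ℕ) + 1)
            ((snocME (fun s : Fin (t + 1) => S.𝓐 (s + 1)) (f, a)) s)
            (trunc0 (snocME (fun s : Fin (t + 1) => S.𝓐 (s + 1)) (f, a)) s) v))
          = (∏ s : Fin t, ENNReal.ofReal (S.lam ((s : ℕ) + 1) (f s) (trunc0 f s) v))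
            * ENNReal.ofReal (S.lam (t + 1) a f v) := fun a => S.prod_lam_snoc_ofReal f a v
      have hmeas : Measurable fun a : S.𝓐 (t + 1) => ENNReal.ofReal (S.lam (t + 1) a f v) := by
        exact ((S.mlam (t + 1)).comp (measurable_id.prodMk (measurable_const (a := (f, v))))).ennreal_ofReal
      rw [lintegral_congr heq, lintegral_const_mul _ hmeas,
        S.lam_lintegral_one (t + 1) h1 ht f v, mul_one]
    calc ∫⁻ av, ∏ s : Fin (t + 1), ENNReal.ofReal
            (S.lam ((s : ℕ) + 1) (av s) (trunc0 av s) v)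
            ∂(Measure.pi fun s : Fin (t + 1) => S.ν (s + 1))
        = ∫⁻ p : (∀ j : Fin t, S.𝓐 (j + 1)) × S.𝓐 (t + 1),
            (∏ s : Fin (t + 1), ENNReal.ofReal (S.lam ((s : ℕ) + 1)
              ((snocME (fun s : Fin (t + 1) => S.𝓐 (s + 1)) p) s)
              (trunc0 (snocME (fun s : Fin (t + 1) => S.𝓐 (s + 1)) p) s) v))
            ∂((Measure.pi fun j : Fin t => S.ν (j + 1)).prod (S.ν (t + 1))) :=
          (hmp.lintegral_comp mint).symm
      _ = ∫⁻ f, ∫⁻ a, (∏ s : Fin (t + 1), ENNReal.ofReal (S.lam ((s : ℕ) + 1)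
            ((snocME (fun s : Fin (t + 1) => S.𝓐 (s + 1)) (f, a)) s)
            (trunc0 (snocME (fun s : Fin (t + 1) => S.𝓐 (s + 1)) (f, a)) s) v))
            ∂S.ν (t + 1) ∂(Measure.pi fun j : Fin t => S.ν (j + 1)) :=
          lintegral_prod _ ((mint.comp (snocME _).measurable).aemeasurable)
      _ = ∫⁻ f, (∏ s : Fin t, ENNReal.ofReal (S.lam ((s : ℕ) + 1) (f s) (trunc0 f s) v))
            ∂(Measure.pi fun j : Fin t => S.ν (j + 1)) := lintegral_congr hinner
      _ = 1 := IH ht' v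

/-- Fubini step merging the last coordinate into the product measure. -/
lemma inner_fubini (t : ℕ) (ht : t + 1 ≤ τ)
    (φ : (∀ s : Fin (t + 1), S.𝓐 (s + 1)) → S.𝓛 1 → ℝ)
    (mφ : Measurable fun p : (∀ s : Fin (t + 1), S.𝓐 (s + 1)) × S.𝓛 1 => φ p.1 p.2)
    (C : ℝ) (bφ : ∀ av v, |φ av v| ≤ C) (hC0 : 0 ≤ C) (v : S.𝓛 1) :
    ∫ av, φ av v * ∏ s : Fin (t + 1), S.lam ((s : ℕ) + 1) (av s) (trunc0 av s) v
        ∂(Measure.pi fun s : Fin (t + 1) => S.ν (s + 1))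
      = ∫ f, (∫ a, φ (Fin.snoc f a) v * S.lam (t + 1) a f v ∂S.ν (t + 1)) *
          ∏ s : Fin t, S.lam ((s : ℕ) + 1) (f s) (trunc0 f s) v
          ∂(Measure.pi fun s : Fin t => S.ν (s + 1)) := by
  have h1 : 1 ≤ t + 1 := Nat.le_add_left 1 t
  have hmp := measurePreserving_snocME (fun s : Fin (t + 1) => S.ν (s + 1))
  set G : (∀ s : Fin (t + 1), S.𝓐 (s + 1)) → ℝ := fun av =>
    φ av v * ∏ s : Fin (t + 1), S.lam ((s : ℕ) + 1) (av s) (trunc0 av s) v with hG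
  have mtrunc : ∀ s : Fin (t + 1),
      Measurable fun av : ∀ s' : Fin (t + 1), S.𝓐 (s' + 1) => trunc0 av s :=
    fun s => measurable_pi_lambda _ fun j => measurable_pi_apply _
  have mlamprod : Measurable fun av : ∀ s : Fin (t + 1), S.𝓐 (s + 1) =>
      ∏ s : Fin (t + 1), S.lam ((s : ℕ) + 1) (av s) (trunc0 av s) v := by
    refine Finset.measurable_prod _ fun s _ => ?_
    exact (S.mlam ((s : ℕ) + 1)).comp
      ((measurable_pi_apply s).prodMk ((mtrunc s).prodMk measurable_const))
  have mG : Measurable G :=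
    (mφ.comp (measurable_id.prodMk measurable_const)).mul mlamprod
  have hstep1 : ∫ av, G av ∂(Measure.pi fun s : Fin (t + 1) => S.ν (s + 1))
      = ∫ p : (∀ j : Fin t, S.𝓐 (j + 1)) × S.𝓐 (t + 1),
          G (snocME (fun s : Fin (t + 1) => S.𝓐 (s + 1)) p)
          ∂((Measure.pi fun j : Fin t => S.ν (j + 1)).prod (S.ν (t + 1))) :=
    (hmp.integral_comp' G).symm
  have hGb : ∀ p : (∀ j : Fin t, S.𝓐 (j + 1)) × S.𝓐 (t + 1),
      ‖G (snocME (fun s : Fin (t + 1) => S.𝓐 (s + 1)) p)‖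
        ≤ C * ∏ s : Fin (t + 1), S.lam ((s : ℕ) + 1)
            ((snocME (fun s : Fin (t + 1) => S.𝓐 (s + 1)) p) s)
            (trunc0 (snocME (fun s : Fin (t + 1) => S.𝓐 (s + 1)) p) s) v := by
    intro p
    have hpn : 0 ≤ ∏ s : Fin (t + 1), S.lam ((s : ℕ) + 1)
        ((snocME (fun s : Fin (t + 1) => S.𝓐 (s + 1)) p) s)
        (trunc0 (snocME (fun s : Fin (t + 1) => S.𝓐 (s + 1)) p) s) v :=
      Finset.prod_nonneg fun s _ => S.lam_nonneg _ _ _ _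
    rw [Real.norm_eq_abs, hG]
    rw [abs_mul, abs_of_nonneg hpn]
    exact mul_le_mul_of_nonneg_right (bφ _ _) hpn
  have hint : Integrable
      (fun p : (∀ j : Fin t, S.𝓐 (j + 1)) × S.𝓐 (t + 1) =>
        G (snocME (fun s : Fin (t + 1) => S.𝓐 (s + 1)) p))
      ((Measure.pi fun j : Fin t => S.ν (j + 1)).prod (S.ν (t + 1))) := by
    refine ⟨(mG.comp (snocME _).measurable).aestronglyMeasurable, ?_⟩
    have hb1 : ∀ p : (∀ j : Fin t, S.𝓐 (j + 1)) × S.𝓐 (t + 1),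
        (‖G (snocME (fun s : Fin (t + 1) => S.𝓐 (s + 1)) p)‖₊ : ℝ≥0∞)
          ≤ ENNReal.ofReal C * ∏ s : Fin (t + 1), ENNReal.ofReal (S.lam ((s : ℕ) + 1)
              ((snocME (fun s : Fin (t + 1) => S.𝓐 (s + 1)) p) s)
              (trunc0 (snocME (fun s : Fin (t + 1) => S.𝓐 (s + 1)) p) s) v) := by
      intro p
      rw [← enorm_eq_nnnorm, ← ofReal_norm, ← ENNReal.ofReal_prod_of_nonneg
        (fun s _ => S.lam_nonneg _ _ _ _), ← ENNReal.ofReal_mul hC0]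
      exact ENNReal.ofReal_le_ofReal (hGb p)
    have mofr : Measurable fun av : ∀ s : Fin (t + 1), S.𝓐 (s + 1) =>
        ∏ s : Fin (t + 1), ENNReal.ofReal
          (S.lam ((s : ℕ) + 1) (av s) (trunc0 av s) v) := by
      refine Finset.measurable_prod _ fun s _ => ?_
      exact ENNReal.measurable_ofReal.comp ((S.mlam ((s : ℕ) + 1)).comp
        ((measurable_pi_apply s).prodMk ((mtrunc s).prodMk measurable_const)))
    show (∫⁻ p, (‖G (snocME (fun s : Fin (t + 1) => S.𝓐 (s + 1)) p)‖₊ : ℝ≥0∞)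
        ∂((Measure.pi fun j : Fin t => S.ν (j + 1)).prod (S.ν (t + 1)))) < ⊤
    calc ∫⁻ p, (‖G (snocME (fun s : Fin (t + 1) => S.𝓐 (s + 1)) p)‖₊ : ℝ≥0∞)
          ∂((Measure.pi fun j : Fin t => S.ν (j + 1)).prod (S.ν (t + 1)))
        ≤ ∫⁻ p, ENNReal.ofReal C * ∏ s : Fin (t + 1), ENNReal.ofReal (S.lam ((s : ℕ) + 1)
            ((snocME (fun s : Fin (t + 1) => S.𝓐 (s + 1)) p) s)
            (trunc0 (snocME (fun s : Fin (t + 1) => S.𝓐 (s + 1)) p) s) v)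
            ∂((Measure.pi fun j : Fin t => S.ν (j + 1)).prod (S.ν (t + 1))) :=
          lintegral_mono hb1
      _ = ENNReal.ofReal C * ∫⁻ p, (∏ s : Fin (t + 1), ENNReal.ofReal (S.lam ((s : ℕ) + 1)
            ((snocME (fun s : Fin (t + 1) => S.𝓐 (s + 1)) p) s)
            (trunc0 (snocME (fun s : Fin (t + 1) => S.𝓐 (s + 1)) p) s) v))
            ∂((Measure.pi fun j : Fin t => S.ν (j + 1)).prod (S.ν (t + 1))) :=
          lintegral_const_mul _ (mofr.comp (snocME _).measurable)
      _ = ENNReal.ofReal C * ∫⁻ av, (∏ s : Fin (t + 1), ENNReal.ofReal (S.lam ((s : ℕ) + 1)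
            (av s) (trunc0 av s) v)) ∂(Measure.pi fun s : Fin (t + 1) => S.ν (s + 1)) := by
          congr 1
          exact hmp.lintegral_comp mofr
      _ = ENNReal.ofReal C := by rw [S.pi_lam_lintegral (t + 1) ht v, mul_one]
      _ < ⊤ := ENNReal.ofReal_lt_top
  rw [hstep1, integral_prod _ hint]
  refine integral_congr_ae (Filter.Eventually.of_forall fun f => ?_)
  show (∫ a, G (snocME (fun s : Fin (t + 1) => S.𝓐 (s + 1)) (f, a)) ∂S.ν (t + 1))
    = (∫ a, φ (Fin.snoc f a) v * S.lam (t + 1) a f v ∂S.ν (t + 1)) *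
      ∏ s : Fin t, S.lam ((s : ℕ) + 1) (f s) (trunc0 f s) v
  rw [← integral_mul_const]
  refine integral_congr_ae (Filter.Eventually.of_forall fun a => ?_)
  show φ (Fin.snoc f a) v * (∏ s : Fin (t + 1), S.lam ((s : ℕ) + 1)
      ((Fin.snoc f a : ∀ s : Fin (t + 1), S.𝓐 (s + 1)) s) (trunc0 (Fin.snoc f a) s) v)
    = (φ (Fin.snoc f a) v * S.lam (t + 1) a f v) *
      ∏ s : Fin t, S.lam ((s : ℕ) + 1) (f s) (trunc0 f s) v
  rw [S.prod_lam_snoc f a v]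
  ring

/-- The main induction: change of measure for the first `t` steps. -/
lemma key : ∀ (t : ℕ), t ≤ τ →
    ∀ (φ : (∀ s : Fin t, S.𝓐 (s + 1)) → S.𝓛 1 → ℝ),
    (Measurable fun p : (∀ s : Fin t, S.𝓐 (s + 1)) × S.𝓛 1 => φ p.1 p.2) →
    ∀ C : ℝ, (∀ av v, |φ av v| ≤ C) →
    ∫ ω, (∏ j : Fin t, S.r ((j : ℕ) + 1) (S.A ((j : ℕ) + 1) ω) (S.H ((j : ℕ) + 1) ω)) *
        φ (fun s => S.A ((s : ℕ) + 1) ω) (S.Lv 1 ω) ∂S.P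
      = ∫ ω, ∫ av, φ av (S.Lv 1 ω) *
          ∏ s : Fin t, S.lam ((s : ℕ) + 1) (av s) (trunc0 av s) (S.Lv 1 ω)
          ∂(Measure.pi fun s : Fin t => S.ν (s + 1)) ∂S.P := by
  intro t
  induction t with
  | zero =>
    intro _ φ mφ C bφ
    haveI : IsProbabilityMeasure (Measure.pi fun s : Fin 0 => S.ν (s + 1)) :=
      ⟨by rw [Measure.pi_univ]; simp⟩
    have hφe : ∀ (av : ∀ s : Fin 0, S.𝓐 (s + 1)) (w : S.𝓛 1),
        φ av w = φ (fun s => s.elim0) w := fun av w => by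
      congr 1
      exact funext fun s => s.elim0
    have hrhs : ∀ w : S.𝓛 1, (∫ av, φ av w *
        ∏ s : Fin 0, S.lam ((s : ℕ) + 1) (av s) (trunc0 av s) w
        ∂(Measure.pi fun s : Fin 0 => S.ν (s + 1))) = φ (fun s => s.elim0) w := by
      intro w
      have : ∀ av : ∀ s : Fin 0, S.𝓐 (s + 1), φ av w *
          ∏ s : Fin 0, S.lam ((s : ℕ) + 1) (av s) (trunc0 av s) w
          = φ (fun s => s.elim0) w := by
        intro av
        rw [Fin.prod_univ_zero, mul_one, hφe]
      rw [integral_congr_ae (Filter.Eventually.of_forall this), integral_const]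
      simp
    calc ∫ ω, (∏ j : Fin 0, S.r ((j : ℕ) + 1) (S.A ((j : ℕ) + 1) ω) (S.H ((j : ℕ) + 1) ω)) *
            φ (fun s => S.A ((s : ℕ) + 1) ω) (S.Lv 1 ω) ∂S.P
        = ∫ ω, φ (fun s : Fin 0 => s.elim0) (S.Lv 1 ω) ∂S.P := by
          refine integral_congr_ae (Filter.Eventually.of_forall fun ω => ?_)
          show (∏ j : Fin 0, S.r ((j : ℕ) + 1) (S.A ((j : ℕ) + 1) ω) (S.H ((j : ℕ) + 1) ω)) *
            φ (fun s => S.A ((s : ℕ) + 1) ω) (S.Lv 1 ω) = _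
          rw [Fin.prod_univ_zero, one_mul, hφe]
      _ = ∫ ω, ∫ av, φ av (S.Lv 1 ω) *
            ∏ s : Fin 0, S.lam ((s : ℕ) + 1) (av s) (trunc0 av s) (S.Lv 1 ω)
            ∂(Measure.pi fun s : Fin 0 => S.ν (s + 1)) ∂S.P := by
          refine integral_congr_ae (Filter.Eventually.of_forall fun ω => ?_)
          exact (hrhs (S.Lv 1 ω)).symm
  | succ t IH =>
    intro ht φ mφ C bφ
    have ht' : t ≤ τ := le_trans (Nat.le_succ t) ht
    have h1 : 1 ≤ t + 1 := Nat.le_add_left 1 t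
    obtain ⟨ω₀⟩ := S.nonempty_Omega
    have hC0 : 0 ≤ C :=
      le_trans (abs_nonneg _) (bφ (fun s => S.A ((s : ℕ) + 1) ω₀) (S.Lv 1 ω₀))
    have msnoc : Measurable fun p : (∀ j : Fin t, S.𝓐 (j + 1)) × S.𝓐 (t + 1) =>
        (Fin.snoc p.1 p.2 : ∀ s : Fin (t + 1), S.𝓐 (s + 1)) :=
      (snocME (fun s : Fin (t + 1) => S.𝓐 (s + 1))).measurable
    set φ' : (∀ s : Fin t, S.𝓐 (s + 1)) → S.𝓛 1 → ℝ := fun f w =>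
      ∫ a, φ (Fin.snoc f a) w * S.lam (t + 1) a f w ∂S.ν (t + 1) with hφ'
    have mφsnoc : Measurable fun q : ((∀ s : Fin t, S.𝓐 (s + 1)) × S.𝓛 1) × S.𝓐 (t + 1) =>
        φ (Fin.snoc q.1.1 q.2) q.1.2 * S.lam (t + 1) q.2 q.1.1 q.1.2 := by
      refine Measurable.mul ?_ ?_
      · exact mφ.comp ((msnoc.comp ((measurable_fst.comp measurable_fst).prodMk
          measurable_snd)).prodMk (measurable_snd.comp measurable_fst))
      · exact (S.mlam (t + 1)).comp (measurable_snd.prodMk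
          ((measurable_fst.comp measurable_fst).prodMk (measurable_snd.comp measurable_fst)))
    have mφ' : Measurable fun p : (∀ s : Fin t, S.𝓐 (s + 1)) × S.𝓛 1 => φ' p.1 p.2 :=
      (mφsnoc.stronglyMeasurable.integral_prod_right').measurable
    have hlam_int : ∀ (f : ∀ j : Fin t, S.𝓐 (j + 1)) (w : S.𝓛 1),
        Integrable (fun a => S.lam (t + 1) a f w) (S.ν (t + 1)) :=
      fun f w => S.lam_integrable (t + 1) h1 ht f w
    have hint_philam : ∀ (f : ∀ j : Fin t, S.𝓐 (j + 1)) (w : S.𝓛 1),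
        Integrable (fun a => φ (Fin.snoc f a) w * S.lam (t + 1) a f w) (S.ν (t + 1)) := by
      intro f w
      have hms : Measurable fun a : S.𝓐 (t + 1) =>
          (Fin.snoc f a : ∀ s : Fin (t + 1), S.𝓐 (s + 1)) :=
        msnoc.comp (measurable_const.prodMk measurable_id)
      refine (hlam_int f w).bdd_mul ((mφ.comp (hms.prodMk
        measurable_const)).aestronglyMeasurable) (c := C) (Filter.Eventually.of_forall fun a => ?_)
      rw [Real.norm_eq_abs]
      exact bφ _ _
    have bφ' : ∀ f w, |φ' f w| ≤ C := by
      intro f w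
      have habs : |φ' f w| ≤ ∫ a, |φ (Fin.snoc f a) w * S.lam (t + 1) a f w| ∂S.ν (t + 1) := by
        have h := norm_integral_le_integral_norm (μ := S.ν (t + 1))
          (f := fun a => φ (Fin.snoc f a) w * S.lam (t + 1) a f w)
        simpa only [Real.norm_eq_abs, hφ'] using h
      refine le_trans habs (le_trans (integral_mono (hint_philam f w).abs
        ((hlam_int f w).const_mul C) fun a => ?_) ?_)
      · rw [abs_mul, abs_of_nonneg (S.lam_nonneg (t + 1) a f w)]
        exact mul_le_mul_of_nonneg_right (bφ _ _) (S.lam_nonneg (t + 1) a f w)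
      · rw [integral_const_mul, S.lam_prob (t + 1) h1 ht f w, mul_one]
    set F : S.𝓐 (t + 1) → Hist S.𝓐 S.𝓛 (t + 1) → ℝ := fun a h =>
      (∏ j : Fin t, S.r ((j : ℕ) + 1) (h.1 j)
        (histProj h ((j : ℕ) + 1) (Nat.succ_le_succ (Nat.le_of_lt j.isLt)))) *
        φ (Fin.snoc h.1 a) h.2.2 with hFdef
    have mF : Measurable fun p : S.𝓐 (t + 1) × Hist S.𝓐 S.𝓛 (t + 1) => F p.1 p.2 := by
      refine Measurable.mul ?_ ?_
      · refine Finset.measurable_prod _ fun j _ => ?_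
        refine (S.measurable_r ((j : ℕ) + 1)).comp (Measurable.prodMk ?_ ?_)
        · exact (measurable_pi_apply _).comp (measurable_fst.comp measurable_snd)
        · refine Measurable.prodMk ?_ (Measurable.prodMk ?_ ?_)
          · exact measurable_pi_lambda _ fun s =>
              (measurable_pi_apply _).comp (measurable_fst.comp measurable_snd)
          · exact measurable_pi_lambda _ fun s =>
              (measurable_pi_apply _).comp ((measurable_fst.comp measurable_snd).comp
                measurable_snd)
          · exact measurable_snd.comp (measurable_snd.comp measurable_snd)
      · exact mφ.comp ((msnoc.comp ((measurable_fst.comp measurable_snd).prodMk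
          measurable_fst)).prodMk (measurable_snd.comp (measurable_snd.comp measurable_snd)))
    have hFbound : ∀ᵐ ω ∂S.P, |F (S.A (t + 1) ω) (S.H (t + 1) ω)| ≤ c ^ t * C := by
      have hall : ∀ᵐ ω ∂S.P, ∀ j : Fin t,
          |S.r ((j : ℕ) + 1) (S.A ((j : ℕ) + 1) ω) (S.H ((j : ℕ) + 1) ω)| ≤ c := by
        rw [ae_all_iff]
        intro j
        exact S.r_bound ((j : ℕ) + 1) (Nat.le_add_left 1 j) (by have := j.isLt; omega)
      filter_upwards [hall] with ω hω
      have hFeq : F (S.A (t + 1) ω) (S.H (t + 1) ω)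
          = (∏ j : Fin t, S.r ((j : ℕ) + 1) (S.A ((j : ℕ) + 1) ω) (S.H ((j : ℕ) + 1) ω)) *
            φ (Fin.snoc (fun j : Fin t => S.A ((j : ℕ) + 1) ω) (S.A (t + 1) ω)) (S.Lv 1 ω) :=
        rfl
      rw [hFeq, abs_mul]
      refine mul_le_mul ?_ (bφ _ _) (abs_nonneg _) (pow_nonneg S.c_nonneg t)
      calc |∏ j : Fin t, S.r ((j : ℕ) + 1) (S.A ((j : ℕ) + 1) ω) (S.H ((j : ℕ) + 1) ω)|
          = ∏ j : Fin t, |S.r ((j : ℕ) + 1) (S.A ((j : ℕ) + 1) ω) (S.H ((j : ℕ) + 1) ω)| :=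
            Finset.abs_prod _ _
        _ ≤ ∏ _j : Fin t, c :=
            Finset.prod_le_prod (fun j _ => abs_nonneg _) (fun j _ => hω j)
        _ = c ^ t := by rw [Finset.prod_const, Finset.card_univ, Fintype.card_fin]
    have hsnocA : ∀ ω, (Fin.snoc (fun j : Fin t => S.A ((j : ℕ) + 1) ω) (S.A (t + 1) ω) :
        ∀ s : Fin (t + 1), S.𝓐 (s + 1)) = fun s : Fin (t + 1) => S.A ((s : ℕ) + 1) ω := by
      intro ω
      funext s
      induction s using Fin.lastCases with
      | last =>
        rw [Fin.snoc_last]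
        rfl
      | cast j =>
        rw [Fin.snoc_castSucc]
        rfl
    calc ∫ ω, (∏ j : Fin (t + 1), S.r ((j : ℕ) + 1) (S.A ((j : ℕ) + 1) ω)
            (S.H ((j : ℕ) + 1) ω)) * φ (fun s => S.A ((s : ℕ) + 1) ω) (S.Lv 1 ω) ∂S.P
        = ∫ ω, S.r (t + 1) (S.A (t + 1) ω) (S.H (t + 1) ω) *
            F (S.A (t + 1) ω) (S.H (t + 1) ω) ∂S.P := by
          refine integral_congr_ae (Filter.Eventually.of_forall fun ω => ?_)
          show (∏ j : Fin (t + 1), S.r ((j : ℕ) + 1) (S.A ((j : ℕ) + 1) ω)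
              (S.H ((j : ℕ) + 1) ω)) * φ (fun s => S.A ((s : ℕ) + 1) ω) (S.Lv 1 ω)
            = S.r (t + 1) (S.A (t + 1) ω) (S.H (t + 1) ω) *
              F (S.A (t + 1) ω) (S.H (t + 1) ω)
          have hFeq : F (S.A (t + 1) ω) (S.H (t + 1) ω)
              = (∏ j : Fin t, S.r ((j : ℕ) + 1) (S.A ((j : ℕ) + 1) ω) (S.H ((j : ℕ) + 1) ω)) *
                φ (fun s : Fin (t + 1) => S.A ((s : ℕ) + 1) ω) (S.Lv 1 ω) := by
            rw [show F (S.A (t + 1) ω) (S.H (t + 1) ω)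
                = (∏ j : Fin t, S.r ((j : ℕ) + 1) (S.A ((j : ℕ) + 1) ω)
                    (S.H ((j : ℕ) + 1) ω)) *
                  φ (Fin.snoc (fun j : Fin t => S.A ((j : ℕ) + 1) ω) (S.A (t + 1) ω))
                    (S.Lv 1 ω) from rfl, hsnocA ω]
          rw [hFeq, Fin.prod_univ_castSucc]
          show ((∏ j : Fin t, S.r ((j : ℕ) + 1) (S.A ((j : ℕ) + 1) ω) (S.H ((j : ℕ) + 1) ω)) *
              S.r (t + 1) (S.A (t + 1) ω) (S.H (t + 1) ω)) *
              φ (fun s : Fin (t + 1) => S.A ((s : ℕ) + 1) ω) (S.Lv 1 ω) = _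
          ring
      _ = ∫ ω, ∫ a, F a (S.H (t + 1) ω) *
            S.lam (t + 1) a (S.H (t + 1) ω).1 (S.H (t + 1) ω).2.2 ∂S.ν (t + 1) ∂S.P :=
          S.step_change (t + 1) h1 ht F mF (c ^ t * C) hFbound
      _ = ∫ ω, (∏ j : Fin t, S.r ((j : ℕ) + 1) (S.A ((j : ℕ) + 1) ω) (S.H ((j : ℕ) + 1) ω)) *
            φ' (fun j : Fin t => S.A ((j : ℕ) + 1) ω) (S.Lv 1 ω) ∂S.P := by
          refine integral_congr_ae (Filter.Eventually.of_forall fun ω => ?_)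
          show (∫ a, F a (S.H (t + 1) ω) *
              S.lam (t + 1) a (S.H (t + 1) ω).1 (S.H (t + 1) ω).2.2 ∂S.ν (t + 1))
            = (∏ j : Fin t, S.r ((j : ℕ) + 1) (S.A ((j : ℕ) + 1) ω) (S.H ((j : ℕ) + 1) ω)) *
              ∫ a, φ (Fin.snoc (fun j : Fin t => S.A ((j : ℕ) + 1) ω) a) (S.Lv 1 ω) *
                S.lam (t + 1) a (fun j : Fin t => S.A ((j : ℕ) + 1) ω) (S.Lv 1 ω) ∂S.ν (t + 1)
          rw [← integral_const_mul]
          refine integral_congr_ae (Filter.Eventually.of_forall fun a => ?_)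
          show ((∏ j : Fin t, S.r ((j : ℕ) + 1) (S.A ((j : ℕ) + 1) ω) (S.H ((j : ℕ) + 1) ω)) *
              φ (Fin.snoc (fun j : Fin t => S.A ((j : ℕ) + 1) ω) a) (S.Lv 1 ω)) *
              S.lam (t + 1) a (fun j : Fin t => S.A ((j : ℕ) + 1) ω) (S.Lv 1 ω) = _
          ring
      _ = ∫ ω, ∫ f, φ' f (S.Lv 1 ω) *
            ∏ s : Fin t, S.lam ((s : ℕ) + 1) (f s) (trunc0 f s) (S.Lv 1 ω)
            ∂(Measure.pi fun s : Fin t => S.ν (s + 1)) ∂S.P := IH ht' φ' mφ' C bφ'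
      _ = ∫ ω, ∫ av, φ av (S.Lv 1 ω) *
            ∏ s : Fin (t + 1), S.lam ((s : ℕ) + 1) (av s) (trunc0 av s) (S.Lv 1 ω)
            ∂(Measure.pi fun s : Fin (t + 1) => S.ν (s + 1)) ∂S.P := by
          refine integral_congr_ae (Filter.Eventually.of_forall fun ω => ?_)
          exact (S.inner_fubini t ht φ mφ C bφ hC0 (S.Lv 1 ω)).symm

end LongSetup

end AuxChangeOfMeasure

/-- multi-step change of measure / IPW identity: for every bounded
jointly measurable `ψ : 𝓐_1 × ⋯ × 𝓐_τ × 𝓛_1 → ℝ`,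
`E[(∏_{t=1}^τ r_t(A_t,H_t)) ψ(Ā, V)] = E[∫ ψ(av, V) ∏_{t=1}^τ λ_t(a_t, av_{t-1}, V) d(ν_1 ⊗ ⋯ ⊗ ν_τ)(av)]`. -/
theorem multi_step_change_of_measure {τ d : ℕ} {c : ℝ} (S : LongSetup τ d c)
    (ψ : (∀ s : Fin τ, S.𝓐 (s + 1)) → S.𝓛 1 → ℝ)
    (mψ : Measurable fun p : (∀ s : Fin τ, S.𝓐 (s + 1)) × S.𝓛 1 => ψ p.1 p.2)
    (bψ : ∃ C, ∀ av v, |ψ av v| ≤ C) :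
    ∫ ω, (∏ t ∈ Finset.Icc 1 τ, S.r t (S.A t ω) (S.H t ω)) * ψ (S.Abar ω) (S.V ω) ∂S.P
      = ∫ ω, ∫ av, ψ av (S.V ω) *
            ∏ s : Fin τ, S.lam (s + 1) (av s) (truncA av (s + 1) s.isLt) (S.V ω)
          ∂(Measure.pi fun s : Fin τ => S.ν (s + 1)) ∂S.P := by
  obtain ⟨C, bC⟩ := bψ
  have hkey := S.key τ le_rfl ψ mψ C bC
  have hprod : ∀ ω, (∏ t ∈ Finset.Icc 1 τ, S.r t (S.A t ω) (S.H t ω))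
      = ∏ j : Fin τ, S.r ((j : ℕ) + 1) (S.A ((j : ℕ) + 1) ω) (S.H ((j : ℕ) + 1) ω) := by
    intro ω
    rw [Fin.prod_univ_eq_prod_range (fun k => S.r (k + 1) (S.A (k + 1) ω) (S.H (k + 1) ω)) τ]
    rw [← Finset.Ico_add_one_right_eq_Icc, Finset.prod_Ico_eq_prod_range]
    refine Finset.prod_congr (by simp) fun i _ => by rw [Nat.add_comm]
  calc ∫ ω, (∏ t ∈ Finset.Icc 1 τ, S.r t (S.A t ω) (S.H t ω)) * ψ (S.Abar ω) (S.V ω) ∂S.P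
      = ∫ ω, (∏ j : Fin τ, S.r ((j : ℕ) + 1) (S.A ((j : ℕ) + 1) ω) (S.H ((j : ℕ) + 1) ω)) *
          ψ (fun s => S.A ((s : ℕ) + 1) ω) (S.Lv 1 ω) ∂S.P := by
        refine integral_congr_ae (Filter.Eventually.of_forall fun ω => ?_)
        show (∏ t ∈ Finset.Icc 1 τ, S.r t (S.A t ω) (S.H t ω)) * ψ (S.Abar ω) (S.V ω)
          = (∏ j : Fin τ, S.r ((j : ℕ) + 1) (S.A ((j : ℕ) + 1) ω) (S.H ((j : ℕ) + 1) ω)) *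
            ψ (fun s => S.A ((s : ℕ) + 1) ω) (S.Lv 1 ω)
        rw [hprod ω]
        rfl
    _ = ∫ ω, ∫ av, ψ av (S.Lv 1 ω) *
          ∏ s : Fin τ, S.lam ((s : ℕ) + 1) (av s) (trunc0 av s) (S.Lv 1 ω)
          ∂(Measure.pi fun s : Fin τ => S.ν (s + 1)) ∂S.P := hkey
    _ = ∫ ω, ∫ av, ψ av (S.V ω) *
            ∏ s : Fin τ, S.lam (s + 1) (av s) (truncA av (s + 1) s.isLt) (S.V ω)
          ∂(Measure.pi fun s : Fin τ => S.ν (s + 1)) ∂S.P := rfl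



end
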